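/- The extended no broken circuit complex Δ^ENBC_{M,≺} is pure of dimension r+1: every facet F̄ = {y_i : i ∈ F} ∪ {x_j : j ∈ L(F)\F} ∪ {y_0} has exactly r+2 vertices, where F ranges over faces of the reduced no broken circuit complex and L(F) is the ≺-lex-maximal basis containing F. -/

import Mathlib

open Set

/-- A circuit of a matroid: a minimal dependent set. -/
def Matroid.IsCircuit' {α : Type*} (M : Matroid α) (C : Set α) : Prop :=
  M.Dep C ∧ ∀ D ⊂ C, M.Indep D

/-- A broken circuit: a circuit with its least element (in the natural order) removed. -/
def Matroid.IsBrokenCircuit {n : ℕ} (M : Matroid (Fin (n + 1))) (B : Set (Fin (n + 1))) : Prop :=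
  ∃ C m, M.IsCircuit' C ∧ m ∈ C ∧ (∀ k ∈ C, m ≤ k) ∧ B = C \ {m}

/-- The rank of a set in a matroid: the largest size of an independent subset. -/
noncomputable def Matroid.rk' {α : Type*} (M : Matroid α) (S : Set α) : ℕ :=
  sSup {k | ∃ I, I ⊆ S ∧ M.Indep I ∧ I.ncard = k}

/-- A face of the reduced no broken circuit complex: a subset of `{1,…,n}` containing
no broken circuit (such a set is automatically independent). -/
def RNBCface {n : ℕ} (M : Matroid (Fin (n + 1))) (F : Set (Fin (n + 1))) : Prop :=
  (0 : Fin (n + 1)) ∉ F ∧ (∀ B, M.IsBrokenCircuit B → ¬ B ⊆ F) ∧ M.Indep F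

/-- The up-set `i↑` of `i` with respect to a second linear order `≺` (including `i` itself). -/
def upSet {n : ℕ} (prec : LinearOrder (Fin (n + 1))) (i : Fin (n + 1)) : Set (Fin (n + 1)) :=
  {j | prec.le i j}

/-- `L(F)`: the candidate `≺`-lexicographically maximal basis containing `F`, defined by
`i ∈ L(F)` iff `i ∈ F` or `rk(i↑ ∪ F) > rk((i↑ \ {i}) ∪ F)`. -/
noncomputable def LSet {n : ℕ} (M : Matroid (Fin (n + 1))) (prec : LinearOrder (Fin (n + 1)))
    (F : Set (Fin (n + 1))) : Set (Fin (n + 1)) :=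
  {i | i ∈ F ∨ M.rk' (upSet prec i ∪ F) > M.rk' ((upSet prec i \ {i}) ∪ F)}

/-- The facet `F̄` of the extended no broken circuit complex attached to a face `F` of the
reduced no broken circuit complex:  `{y_i : i ∈ F} ∪ {x_j : j ∈ L(F) \ F} ∪ {y_0}`,
with `x`-vertices encoded by `Sum.inl` and `y`-vertices by `Sum.inr`. -/
noncomputable def barFace {n : ℕ} (M : Matroid (Fin (n + 1))) (prec : LinearOrder (Fin (n + 1)))
    (F : Set (Fin (n + 1))) : Set (Fin (n + 1) ⊕ Fin (n + 1)) :=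
  (Sum.inr '' F) ∪ (Sum.inl '' (LSet M prec F \ F)) ∪ {Sum.inr 0}

/-- A face of the extended no broken circuit complex `Δ^ENBC_{M,≺}`: a subset of some
facet `F̄`. -/
noncomputable def ENBCface {n : ℕ} (M : Matroid (Fin (n + 1))) (prec : LinearOrder (Fin (n + 1)))
    (G : Set (Fin (n + 1) ⊕ Fin (n + 1))) : Prop :=
  ∃ F, RNBCface M F ∧ G ⊆ barFace M prec F

section helpers

variable {α : Type*} [Finite α] (M : Matroid α) {S X : Set α} {e : α}

lemma rk'_bdd (S : Set α) : BddAbove {k | ∃ I, I ⊆ S ∧ M.Indep I ∧ I.ncard = k} := by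
  refine ⟨Nat.card α, fun k hk => ?_⟩
  obtain ⟨I, -, -, rfl⟩ := hk
  simpa [Set.ncard_univ] using Set.ncard_le_ncard (subset_univ I) (Set.toFinite _)

lemma le_rk' {I : Set α} (hI : M.Indep I) (hIS : I ⊆ S) : I.ncard ≤ M.rk' S :=
  le_csSup (rk'_bdd M S) ⟨I, hIS, hI, rfl⟩

lemma exists_rk' (S : Set α) : ∃ I, I ⊆ S ∧ M.Indep I ∧ I.ncard = M.rk' S := by
  have h0 : (0:ℕ) ∈ {k | ∃ I, I ⊆ S ∧ M.Indep I ∧ I.ncard = k} :=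
    ⟨∅, empty_subset _, M.empty_indep, by simp⟩
  exact Nat.sSup_mem ⟨0, h0⟩ (rk'_bdd M S)

lemma rk'_insert_le (hE : M.E = univ) (he : e ∈ M.closure X) (hX : X ⊆ M.E) :
    M.rk' (insert e X) ≤ M.rk' X := by
  obtain ⟨I, hIS, hI, hcard⟩ := exists_rk' M (insert e X)
  rw [← hcard]
  by_cases heI : e ∈ I
  · have hJ : M.Indep (I \ {e}) := hI.subset diff_subset
    have hJX : I \ {e} ⊆ X := fun x hx => (hIS hx.1).resolve_left hx.2
    obtain ⟨B, hB, hJB⟩ := Matroid.Indep.subset_isBasis_of_subset hJ hJX hX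
    have hne : I \ {e} ≠ B := by
      rintro rfl
      have : e ∉ M.closure (I \ {e}) := Matroid.Indep.notMem_closure_diff_of_mem hI heI
      rw [hB.closure_eq_closure] at this
      exact this he
    have hlt : (I \ {e}).ncard < B.ncard :=
      Set.ncard_lt_ncard (hJB.ssubset_of_ne hne) (Set.toFinite _)
    have : I.ncard ≤ (I \ {e}).ncard + 1 := by
      rw [Set.ncard_diff_singleton_of_mem heI]
      omega
    exact le_trans (le_trans this hlt) (le_rk' M hB.indep hB.subset)
  · exact le_rk' M hI (fun x hx => (hIS hx).resolve_left (fun h => heI (h ▸ hx)))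

lemma rk'_lt_insert (hE : M.E = univ) (heX : e ∉ M.closure X) (hX : X ⊆ M.E) :
    M.rk' X < M.rk' (insert e X) := by
  obtain ⟨I, hIS, hI, hcard⟩ := exists_rk' M X
  have heI : e ∉ M.closure I := fun h => heX (M.closure_subset_closure hIS h)
  have heI' : e ∉ I := fun h => heI (M.subset_closure I hI.subset_ground h)
  have hins : M.Indep (insert e I) := by
    rw [Matroid.Indep.insert_indep_iff_of_notMem hI heI']
    exact ⟨by rw [hE]; trivial, heI⟩
  have := le_rk' M hins (insert_subset_insert hIS)
  rw [Set.ncard_insert_of_notMem heI' (Set.toFinite _)] at this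
  omega

end helpers


section key

variable {n : ℕ} (M : Matroid (Fin (n + 1))) (prec : LinearOrder (Fin (n + 1)))
  (F : Set (Fin (n + 1)))

/-- strict upset -/
def V (i : Fin (n + 1)) : Set (Fin (n + 1)) := {j | prec.lt i j}

lemma upSet_eq (i : Fin (n + 1)) : upSet prec i = insert i (V prec i) := by
  ext j
  simp only [upSet, V, mem_setOf_eq, mem_insert_iff]
  constructor
  · intro h
    rcases (@lt_or_eq_of_le _ prec.toPartialOrder i j h) with h' | h'
    · exact Or.inr h'
    · exact Or.inl h'.symm
  · rintro (rfl | h)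
    · exact @le_refl _ prec.toPreorder j
    · exact @le_of_lt _ prec.toPreorder _ _ h

lemma not_mem_V (i : Fin (n + 1)) : i ∉ V prec i := @lt_irrefl _ prec.toPreorder i

theorem key (hE : M.E = univ) (hFi : M.Indep F) :
    M.Indep (LSet M prec F) ∧ Set.univ ⊆ M.closure (LSet M prec F) := by
  set L := LSet M prec F with hL
  have hFL : F ⊆ L := fun x hx => Or.inl hx
  -- step lemma: from the statement for the strict upset to that for the full upset
  have step : ∀ i : Fin (n + 1),
      (M.Indep ((L ∩ V prec i) ∪ F) ∧ (V prec i ∪ F) ⊆ M.closure ((L ∩ V prec i) ∪ F)) →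
      (M.Indep ((L ∩ upSet prec i) ∪ F) ∧
        (upSet prec i ∪ F) ⊆ M.closure ((L ∩ upSet prec i) ∪ F)) := by
    intro i ⟨hA1, hA2⟩
    set A := (L ∩ V prec i) ∪ F with hA
    have hAsub : A ⊆ V prec i ∪ F := union_subset_union_left F inter_subset_right
    have hAE : A ⊆ M.E := by rw [hE]; exact subset_univ _
    have hVFE : V prec i ∪ F ⊆ M.E := by rw [hE]; exact subset_univ _
    have hups : upSet prec i ∪ F = insert i (V prec i ∪ F) := by
      rw [upSet_eq, insert_union]
    have hdiff : upSet prec i \ {i} = V prec i := by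
      rw [upSet_eq]
      rw [insert_diff_of_mem _ (mem_singleton i)]
      exact diff_singleton_eq_self (not_mem_V prec i)
    by_cases hiF : i ∈ F
    · have h1 : L ∩ upSet prec i ∪ F = A := by
        rw [upSet_eq]
        have : L ∩ insert i (V prec i) = insert i (L ∩ V prec i) :=
          inter_insert_of_mem (hFL hiF)
        rw [this, insert_union]
        exact insert_eq_of_mem (mem_union_right _ hiF)
      have h2 : upSet prec i ∪ F = V prec i ∪ F := by
        rw [hups]
        exact insert_eq_of_mem (mem_union_right _ hiF)
      rw [h1, h2]
      exact ⟨hA1, hA2⟩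
    by_cases hiL : i ∈ L
    · -- i ∈ L \ F : rank jumps, so i not in closure
      have hrk : M.rk' (upSet prec i ∪ F) > M.rk' ((upSet prec i \ {i}) ∪ F) :=
        hiL.resolve_left hiF
      rw [hdiff, hups] at hrk
      have hicl : i ∉ M.closure (V prec i ∪ F) := fun h =>
        absurd (rk'_insert_le M hE h hVFE) (by omega)
      have hiclA : i ∉ M.closure A := fun h => hicl (M.closure_subset_closure hAsub h)
      have hiA : i ∉ A := fun h => hiclA (M.subset_closure A hAE h)
      have hB : L ∩ upSet prec i ∪ F = insert i A := by
        rw [upSet_eq, inter_insert_of_mem hiL, insert_union]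
      rw [hB, hups]
      constructor
      · rw [Matroid.Indep.insert_indep_iff_of_notMem hA1 hiA]
        exact ⟨by rw [hE]; trivial, hiclA⟩
      · refine insert_subset ?_ ?_
        · exact M.subset_closure _ (insert_subset (by rw [hE]; trivial) hAE) (mem_insert i A)
        · exact hA2.trans (M.closure_subset_closure (subset_insert i A))
    · -- i ∉ L : rank does not jump, so i in closure
      have hrk : ¬ M.rk' (upSet prec i ∪ F) > M.rk' ((upSet prec i \ {i}) ∪ F) :=
        fun h => hiL (Or.inr h)
      rw [hdiff, hups] at hrk
      have hicl : i ∈ M.closure (V prec i ∪ F) := by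
        by_contra h
        exact hrk (rk'_lt_insert M hE h hVFE)
      have hB : L ∩ upSet prec i ∪ F = A := by
        rw [upSet_eq, inter_insert_of_notMem hiL]
      rw [hB, hups]
      refine ⟨hA1, insert_subset ?_ hA2⟩
      exact M.closure_subset_closure_of_subset_closure hA2 hicl
  -- main downward induction on the size of the strict upset
  have main : ∀ k : ℕ, ∀ i : Fin (n + 1), (V prec i).ncard = k →
      M.Indep ((L ∩ V prec i) ∪ F) ∧ (V prec i ∪ F) ⊆ M.closure ((L ∩ V prec i) ∪ F) := by
    intro k
    induction k using Nat.strong_induction_on with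
    | _ k IH =>
      intro i hk
      rcases eq_or_ne k 0 with rfl | hk0
      · have hVe : V prec i = ∅ := (Set.ncard_eq_zero (Set.toFinite _)).mp hk
        rw [hVe]
        simp only [inter_empty, empty_union]
        exact ⟨hFi, M.subset_closure F (by rw [hE]; exact subset_univ _)⟩
      · have hne : (V prec i).Nonempty := by
          rw [Set.nonempty_iff_ne_empty]
          intro h
          rw [h] at hk; simp at hk; omega
        obtain ⟨j, hjV, hjmin⟩ :=
          @Set.exists_min_image (Fin (n + 1)) (Fin (n + 1)) prec (V prec i) id
            (Set.toFinite _) hne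
        have hVU : V prec i = upSet prec j := by
          ext x
          constructor
          · exact fun hx => hjmin x hx
          · intro hx
            exact @lt_of_lt_of_le _ prec.toPreorder _ _ _ hjV hx
        have hVj : V prec j = V prec i \ {j} := by
          rw [hVU]
          ext x
          simp only [V, mem_setOf_eq, mem_diff, mem_singleton_iff, upSet, mem_setOf_eq]
          constructor
          · intro h
            exact ⟨@le_of_lt _ prec.toPreorder _ _ h, (@ne_of_gt _ prec.toPreorder _ _ h)⟩
          · intro ⟨h1, h2⟩
            exact (@lt_of_le_of_ne _ prec.toPartialOrder _ _ h1 (Ne.symm h2))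
        have hlt : (V prec j).ncard < k := by
          rw [hVj, ← hk]
          exact Set.ncard_diff_singleton_lt_of_mem hjV (Set.toFinite _)
        have := step j (IH _ hlt j rfl)
        rw [← hVU] at this
        exact this
  have i0 := @Set.exists_min_image (Fin (n + 1)) (Fin (n + 1)) prec univ id
    (Set.toFinite _) ⟨0, trivial⟩
  obtain ⟨i, -, hmin⟩ := i0
  have hU : upSet prec i = univ := eq_univ_of_forall (fun x => hmin x trivial)
  have := step i (main _ i rfl)
  rw [hU] at this
  rw [inter_univ] at this
  have hLF : L ∪ F = L := union_eq_self_of_subset_right hFL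
  rw [hLF] at this
  exact ⟨this.1, (subset_union_left).trans this.2⟩

end key


/-- the extended no broken circuit complex is pure of dimension `r+1`: every
facet `F̄ = {y_i : i ∈ F} ∪ {x_j : j ∈ L(F)\F} ∪ {y_0}` has exactly `r+2` vertices. -/
theorem ENBC_pure {n r : ℕ} (M : Matroid (Fin (n + 1)))
    (prec : LinearOrder (Fin (n + 1)))
    (hE : M.E = Set.univ)
    (hsimple : ∀ e f : Fin (n + 1), e ≠ f → M.Indep {e, f})
    (hloopless : ∀ e : Fin (n + 1), M.Indep {e})
    (hrank : ∀ B : Set (Fin (n + 1)), M.IsBase B → B.ncard = r + 1)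
    (F : Set (Fin (n + 1))) (hF : RNBCface M F) :
    (barFace M prec F).ncard = r + 2 := by
  obtain ⟨h0F, -, hFi⟩ := hF
  set L := LSet M prec F with hLdef
  have hFL : F ⊆ L := fun x hx => Or.inl hx
  obtain ⟨hind, hspan⟩ := key M prec F hE hFi
  have hbase : M.IsBase L := by
    refine Matroid.Indep.isBase_of_spanning hind ⟨?_, ?_⟩
    · apply subset_antisymm (M.closure_subset_ground L)
      rw [hE]; exact hspan
    · rw [hE]; exact subset_univ _
  have hLcard : L.ncard = r + 1 := hrank L hbase
  have hbar : barFace M prec F =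
      (Sum.inl '' (L \ F)) ∪ insert (Sum.inr 0) (Sum.inr '' F) := by
    rw [barFace]
    ext x
    simp only [mem_union, mem_insert_iff, mem_singleton_iff, ← hLdef]
    tauto
  have hdisj : Disjoint (Sum.inl '' (L \ F)) (insert (Sum.inr 0) (Sum.inr '' F)) := by
    rw [Set.disjoint_left]
    rintro a ⟨x, -, rfl⟩ (h | ⟨y, -, h⟩) <;> simp at h
  have h0nF : (Sum.inr 0 : Fin (n+1) ⊕ Fin (n+1)) ∉ Sum.inr '' F := by
    rintro ⟨x, hx, h⟩
    exact h0F ((Sum.inr_injective h) ▸ hx)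
  rw [hbar, Set.ncard_union_eq hdisj (Set.toFinite _) (Set.toFinite _),
    Set.ncard_image_of_injective _ Sum.inl_injective,
    Set.ncard_insert_of_notMem h0nF (Set.toFinite _),
    Set.ncard_image_of_injective _ Sum.inr_injective,
    Set.ncard_diff hFL (Set.toFinite _)]
  have hle : F.ncard ≤ L.ncard := Set.ncard_le_ncard hFL (Set.toFinite _)
  omega
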